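/- Define γ : (ℝ²)³ → ℝ³ by γ(a₁, a₂, a₃) = (‖a₂ − a₃‖, ‖a₃ − a₁‖, ‖a₁ − a₂‖). Then for all triples A = (a₁,a₂,a₃) and B = (b₁,b₂,b₃) of points in ℝ²: d(γ(A), γ(B)) ≤ √3 · d_{E(2)}(A,B), where d on ℝ³ is the euclidean distance. -/

import Mathlib

open Matrix
open scoped ComplexOrder

/-- Frobenius norm of a real matrix: `‖A‖ = √(trace (A Aᵀ))`. -/
noncomputable def frobR {n l : ℕ} (A : Matrix (Fin n) (Fin l) ℝ) : ℝ :=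
  Real.sqrt (Matrix.trace (A * Aᵀ))

/-- Frobenius norm of a complex matrix: `‖A‖ = √(trace (A Aᴴ))`. -/
noncomputable def frobC {n l : ℕ} (A : Matrix (Fin n) (Fin l) ℂ) : ℝ :=
  Real.sqrt (Matrix.trace (A * Aᴴ)).re

open Classical in
/-- The unique positive semidefinite square root of a positive semidefinite real
symmetric matrix (junk value `0` if `M` is not positive semidefinite). -/
noncomputable def matSqrtR {k : ℕ} (M : Matrix (Fin k) (Fin k) ℝ) : Matrix (Fin k) (Fin k) ℝ :=
  if h : M.PosSemidef then
    (h.1.eigenvectorUnitary : Matrix (Fin k) (Fin k) ℝ) *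
      diagonal ((RCLike.ofReal : ℝ → ℝ) ∘ Real.sqrt ∘ h.1.eigenvalues) *
      (star h.1.eigenvectorUnitary : Matrix (Fin k) (Fin k) ℝ)
  else 0

open Classical in
/-- The unique positive semidefinite square root of a positive semidefinite hermitian
matrix (junk value `0` if `M` is not positive semidefinite). -/
noncomputable def matSqrtC {k : ℕ} (M : Matrix (Fin k) (Fin k) ℂ) : Matrix (Fin k) (Fin k) ℂ :=
  if h : M.PosSemidef then
    (h.1.eigenvectorUnitary : Matrix (Fin k) (Fin k) ℂ) *
      diagonal ((RCLike.ofReal : ℝ → ℂ) ∘ Real.sqrt ∘ h.1.eigenvalues) *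
      (star h.1.eigenvectorUnitary : Matrix (Fin k) (Fin k) ℂ)
  else 0

/-- Orbit distance for the orthogonal group `O(n)` acting by left multiplication. -/
noncomputable def dO {n l : ℕ} (A B : Matrix (Fin n) (Fin l) ℝ) : ℝ :=
  sInf {x | ∃ W ∈ Matrix.orthogonalGroup (Fin n) ℝ, x = frobR (W * A - B)}

/-- Orbit distance for the unitary group `U(n)` acting by left multiplication. -/
noncomputable def dU {n l : ℕ} (A B : Matrix (Fin n) (Fin l) ℂ) : ℝ :=
  sInf {x | ∃ W ∈ Matrix.unitaryGroup (Fin n) ℂ, x = frobC (W * A - B)}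

/-- `q𝟙ᵀ` : the `n × l` matrix each of whose columns equals `q` (real case). -/
def colMatR {n l : ℕ} (q : Fin n → ℝ) : Matrix (Fin n) (Fin l) ℝ :=
  Matrix.of fun i _ => q i

/-- `q𝟙ᵀ` : the `n × l` matrix each of whose columns equals `q` (complex case). -/
def colMatC {n l : ℕ} (q : Fin n → ℂ) : Matrix (Fin n) (Fin l) ℂ :=
  Matrix.of fun i _ => q i

/-- Orbit distance for the euclidean group `E(n) = O(n) ⋉ ℝⁿ` acting columnwise. -/
noncomputable def dE {n l : ℕ} (A B : Matrix (Fin n) (Fin l) ℝ) : ℝ :=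
  sInf {x | ∃ P ∈ Matrix.orthogonalGroup (Fin n) ℝ, ∃ q : Fin n → ℝ,
    x = frobR (P * A + colMatR q - B)}

/-- Orbit distance for the complex euclidean group `F(n) = U(n) ⋉ ℂⁿ` acting columnwise. -/
noncomputable def dF {n l : ℕ} (A B : Matrix (Fin n) (Fin l) ℂ) : ℝ :=
  sInf {x | ∃ P ∈ Matrix.unitaryGroup (Fin n) ℂ, ∃ q : Fin n → ℂ,
    x = frobC (P * A + colMatC q - B)}

/-- Column-centering `π` : subtract from each column the average of all columns (real case). -/
noncomputable def centerR {n l : ℕ} (A : Matrix (Fin n) (Fin l) ℝ) : Matrix (Fin n) (Fin l) ℝ :=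
  Matrix.of fun i j => A i j - (∑ k, A i k) / (l : ℝ)

/-- Column-centering `π_ℂ` : subtract from each column the average of all columns (complex case). -/
noncomputable def centerC {n l : ℕ} (A : Matrix (Fin n) (Fin l) ℂ) : Matrix (Fin n) (Fin l) ℂ :=
  Matrix.of fun i j => A i j - (∑ k, A i k) / (l : ℂ)

/-- Euclidean norm of a vector in `ℝⁿ`. -/
noncomputable def eunorm {n : ℕ} (v : Fin n → ℝ) : ℝ := Real.sqrt (∑ i, v i ^ 2)

/-- The side-lengths map `γ(a₁,a₂,a₃) = (‖a₂−a₃‖, ‖a₃−a₁‖, ‖a₁−a₂‖)`. -/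
noncomputable def gammaMap (a : Fin 3 → Fin 2 → ℝ) : Fin 3 → ℝ :=
  ![eunorm (a 1 - a 2), eunorm (a 2 - a 0), eunorm (a 0 - a 1)]

/-- Identify a triple of points in `ℝ²` with a `2×3` matrix whose columns are the points. -/
def toMat (a : Fin 3 → Fin 2 → ℝ) : Matrix (Fin 2) (Fin 3) ℝ :=
  Matrix.of fun i j => a j i

lemma eunorm_nonneg' {n : ℕ} (v : Fin n → ℝ) : 0 ≤ eunorm v := Real.sqrt_nonneg _

lemma eunorm_sq' {n : ℕ} (v : Fin n → ℝ) : eunorm v ^ 2 = ∑ i, v i ^ 2 := by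
  rw [eunorm, Real.sq_sqrt]
  positivity

lemma eunorm_sub_le' (u v : Fin 2 → ℝ) :
    |eunorm u - eunorm v| ≤ eunorm (u - v) := by
  have h : ∀ w : Fin 2 → ℝ, eunorm w = ‖(WithLp.equiv 2 (Fin 2 → ℝ)).symm w‖ := by
    intro w
    rw [EuclideanSpace.norm_eq]
    simp [eunorm, Real.norm_eq_abs, sq_abs]
  rw [h, h, h]
  exact abs_norm_sub_norm_le _ _

lemma eunorm_mulVec' (P : Matrix (Fin 2) (Fin 2) ℝ)
    (hP : P ∈ Matrix.orthogonalGroup (Fin 2) ℝ) (v : Fin 2 → ℝ) :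
    eunorm (P.mulVec v) = eunorm v := by
  rw [Matrix.mem_orthogonalGroup_iff] at hP
  replace hP : Pᵀ * P = 1 := mul_eq_one_comm.mp hP
  have h00 := congrFun (congrFun hP 0) 0
  have h01 := congrFun (congrFun hP 0) 1
  have h11 := congrFun (congrFun hP 1) 1
  simp [Matrix.mul_apply, Fin.sum_univ_two, Matrix.one_apply] at h00 h01 h11
  unfold eunorm
  congr 1
  simp only [Matrix.mulVec, dotProduct, Fin.sum_univ_two]
  linear_combination (v 0 ^ 2) * h00 + (2 * v 0 * v 1) * h01 + (v 1 ^ 2) * h11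

lemma key_bound (a b : Fin 3 → Fin 2 → ℝ) (P : Matrix (Fin 2) (Fin 2) ℝ)
    (hP : P ∈ Matrix.orthogonalGroup (Fin 2) ℝ) (q : Fin 2 → ℝ) :
    eunorm (gammaMap a - gammaMap b) ≤
      Real.sqrt 3 * frobR (P * toMat a + colMatR q - toMat b) := by
  set C : Matrix (Fin 2) (Fin 3) ℝ := P * toMat a + colMatR q - toMat b with hC
  -- edge bound
  have edge : ∀ i j : Fin 3,
      |eunorm (a i - a j) - eunorm (b i - b j)| ≤ eunorm (fun k => C k i - C k j) := by
    intro i j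
    have hcol : (fun k => C k i - C k j) = P.mulVec (a i - a j) - (b i - b j) := by
      funext k
      simp [hC, Matrix.mul_apply, Matrix.mulVec, dotProduct, colMatR, toMat,
        Fin.sum_univ_two, Pi.sub_apply]
      fin_cases k <;> simp <;> ring
    rw [hcol]
    calc |eunorm (a i - a j) - eunorm (b i - b j)|
        = |eunorm (P.mulVec (a i - a j)) - eunorm (b i - b j)| := by
          rw [eunorm_mulVec' P hP]
      _ ≤ eunorm (P.mulVec (a i - a j) - (b i - b j)) := eunorm_sub_le' _ _
  -- squares
  have sq_edge : ∀ i j : Fin 3, (eunorm (a i - a j) - eunorm (b i - b j)) ^ 2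
      ≤ ∑ k, (C k i - C k j) ^ 2 := by
    intro i j
    have h1 := edge i j
    have h2 : (eunorm (a i - a j) - eunorm (b i - b j)) ^ 2
        ≤ (eunorm (fun k => C k i - C k j)) ^ 2 := by
      rw [← sq_abs]
      exact pow_le_pow_left₀ (abs_nonneg _) h1 2
    calc (eunorm (a i - a j) - eunorm (b i - b j)) ^ 2
        ≤ (eunorm (fun k => C k i - C k j)) ^ 2 := h2
      _ = ∑ k, (C k i - C k j) ^ 2 := eunorm_sq' _
  -- trace
  have htr : Matrix.trace (C * Cᵀ) = ∑ i, ∑ j, C i j ^ 2 := by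
    simp [Matrix.trace, Matrix.mul_apply, Matrix.diag, sq]
  have htr_nonneg : (0:ℝ) ≤ ∑ i, ∑ j, C i j ^ 2 := by positivity
  -- main square inequality
  have hmain : eunorm (gammaMap a - gammaMap b) ^ 2 ≤ 3 * ∑ i, ∑ j, C i j ^ 2 := by
    rw [eunorm_sq']
    have e12 := sq_edge 1 2
    have e20 := sq_edge 2 0
    have e01 := sq_edge 0 1
    simp only [Fin.sum_univ_two] at e12 e20 e01 ⊢
    simp only [Fin.sum_univ_three, Pi.sub_apply, gammaMap, Matrix.cons_val_zero,
      Matrix.cons_val_one, Matrix.head_cons, Matrix.cons_val_two, Matrix.tail_cons]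
    nlinarith [sq_nonneg (C 0 0 + C 0 1 + C 0 2), sq_nonneg (C 1 0 + C 1 1 + C 1 2)]
  have hfr : frobR C = Real.sqrt (∑ i, ∑ j, C i j ^ 2) := by rw [frobR, htr]
  calc eunorm (gammaMap a - gammaMap b)
      = Real.sqrt (eunorm (gammaMap a - gammaMap b) ^ 2) := by
        rw [Real.sqrt_sq (eunorm_nonneg' _)]
    _ ≤ Real.sqrt (3 * ∑ i, ∑ j, C i j ^ 2) := Real.sqrt_le_sqrt hmain
    _ = Real.sqrt 3 * Real.sqrt (∑ i, ∑ j, C i j ^ 2) := Real.sqrt_mul (by norm_num) _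
    _ = Real.sqrt 3 * frobR C := by rw [hfr]

/-- The side-lengths map of triangles is `√3`-Lipschitz for the orbit distance `d_{E(2)}`. -/
theorem stmt18 (a b : Fin 3 → Fin 2 → ℝ) :
    eunorm (gammaMap a - gammaMap b) ≤ Real.sqrt 3 * dE (toMat a) (toMat b) := by
  have hne : {x | ∃ P ∈ Matrix.orthogonalGroup (Fin 2) ℝ, ∃ q : Fin 2 → ℝ,
      x = frobR (P * toMat a + colMatR q - toMat b)}.Nonempty := by
    exact ⟨frobR ((1 : Matrix (Fin 2) (Fin 2) ℝ) * toMat a + colMatR 0 - toMat b),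
      1, one_mem _, 0, rfl⟩
  have h3 : (0:ℝ) < Real.sqrt 3 := Real.sqrt_pos.mpr (by norm_num)
  have hlow : eunorm (gammaMap a - gammaMap b) / Real.sqrt 3 ≤ dE (toMat a) (toMat b) := by
    apply le_csInf hne
    rintro x ⟨P, hP, q, rfl⟩
    rw [div_le_iff₀ h3, mul_comm]
    exact key_bound a b P hP q
  calc eunorm (gammaMap a - gammaMap b)
      = Real.sqrt 3 * (eunorm (gammaMap a - gammaMap b) / Real.sqrt 3) := by
        field_simp
    _ ≤ Real.sqrt 3 * dE (toMat a) (toMat b) :=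
        mul_le_mul_of_nonneg_left hlow (le_of_lt h3)
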